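/- Let G be a finite group and H <= G a subgroup. Then D(G) <= D(H) * [G : H], where D denotes the large Davenport constant. -/

import Mathlib

section DavenportHelpers

theorem exists_perm_map_eq' {α β : Type*} {f : α → β} :
    ∀ {m : List β} {l : List α}, m.Perm (l.map f) → ∃ l' : List α, l'.Perm l ∧ l'.map f = m := by
  intro m
  induction m with
  | nil =>
    intro l h
    have h0 : l.map f = [] := h.symm.eq_nil
    exact ⟨[], by rw [List.map_eq_nil_iff.mp h0], rfl⟩
  | cons b m ih =>
    intro l h
    have hb : b ∈ l.map f := h.mem_iff.mp List.mem_cons_self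
    obtain ⟨a, ha, rfl⟩ := List.mem_map.mp hb
    obtain ⟨l₁, l₂, rfl⟩ := List.append_of_mem ha
    have hmid : (List.map f (l₁ ++ a :: l₂)).Perm (f a :: List.map f (l₁ ++ l₂)) := by
      simpa using (List.perm_middle (a := f a) (l₁ := l₁.map f) (l₂ := l₂.map f))
    have h2 : m.Perm ((l₁ ++ l₂).map f) := (h.trans hmid).cons_inv
    obtain ⟨l', hp, hm⟩ := ih h2
    exact ⟨a :: l', (hp.cons a).trans List.perm_middle.symm, by simp [hm]⟩

theorem multiset_map_split' {α β : Type*} {f : α → β} {s : Multiset α} {T T' : Multiset β}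
    (h : s.map f = T + T') :
    ∃ B B' : Multiset α, s = B + B' ∧ B.map f = T ∧ B'.map f = T' := by
  obtain ⟨ls, rfl⟩ : ∃ l : List α, (l : Multiset α) = s := ⟨s.toList, Multiset.coe_toList s⟩
  obtain ⟨lt, rfl⟩ : ∃ l : List β, (l : Multiset β) = T := ⟨T.toList, Multiset.coe_toList T⟩
  obtain ⟨lt', rfl⟩ : ∃ l : List β, (l : Multiset β) = T' := ⟨T'.toList, Multiset.coe_toList T'⟩
  rw [Multiset.map_coe, Multiset.coe_add, Multiset.coe_eq_coe] at h
  obtain ⟨l', hp, hm⟩ := exists_perm_map_eq' h.symm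
  refine ⟨↑(l'.take lt.length), ↑(l'.drop lt.length), ?_, ?_, ?_⟩
  · rw [Multiset.coe_add, Multiset.coe_eq_coe, List.take_append_drop]
    exact hp.symm
  · rw [Multiset.map_coe, Multiset.coe_eq_coe, List.map_take, hm, List.take_left]
  · rw [Multiset.map_coe, Multiset.coe_eq_coe, List.map_drop, hm, List.drop_left]

theorem coe_join_eq' {α : Type*} (L : List (List α)) :
    ((L.flatten : List α) : Multiset α)
      = (Multiset.map Multiset.ofList (Multiset.ofList L)).sum := by
  rw [Multiset.map_coe, Multiset.sum_coe]
  induction L with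
  | nil => rfl
  | cons b L ih => simp only [List.flatten_cons, List.map_cons, List.sum_cons, ← ih,
      Multiset.coe_add]

open scoped Classical in
theorem exists_chop' {G : Type*} [Group G] (H : Subgroup G) :
    ∀ (N : ℕ) (l : List G), l.length ≤ N → l ≠ [] → l.prod ∈ H →
    ∃ L : List (List G), L.flatten = l ∧ (∀ b ∈ L, b ≠ [] ∧ b.prod ∈ H) ∧
      ((Finset.range l.length).filter (fun i => (l.take i).prod ∈ H)).card ≤ L.length := by
  intro N
  induction N with
  | zero =>
    intro l hl hne _
    exact absurd (List.length_eq_zero_iff.mp (Nat.le_zero.mp hl)) hne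
  | succ N ih =>
    intro l hlen hne hprod
    have hn : 0 < l.length := List.length_pos_iff.mpr hne
    have hex : ∃ i, 0 < i ∧ (l.take i).prod ∈ H :=
      ⟨l.length, hn, by rw [List.take_length]; exact hprod⟩
    obtain ⟨hm0, hmH⟩ := Nat.find_spec hex
    set m := Nat.find hex with hm
    have hmle : m ≤ l.length := Nat.find_min' hex ⟨hn, by rw [List.take_length]; exact hprod⟩
    by_cases hcase : m = l.length
    · refine ⟨[l], by simp, by simp [hne, hprod], ?_⟩
      have hsub : (Finset.range l.length).filter (fun i => (l.take i).prod ∈ H) ⊆ {0} := by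
        intro i hi
        simp only [Finset.mem_filter, Finset.mem_range] at hi
        simp only [Finset.mem_singleton]
        by_contra h0
        have : m ≤ i := Nat.find_min' hex ⟨Nat.pos_of_ne_zero h0, hi.2⟩
        omega
      simpa using Finset.card_le_card hsub
    · have hmlt : m < l.length := lt_of_le_of_ne hmle hcase
      set rest := l.drop m with hrest
      have hrlen : rest.length = l.length - m := by simp [hrest]
      have hrne : rest ≠ [] := by
        intro h0
        rw [h0] at hrlen
        simp at hrlen
        omega
      have hdecomp : l.take m ++ rest = l := List.take_append_drop m l
      have htprod : (l.take m).prod ∈ H := hmH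
      have hrprod : rest.prod ∈ H := by
        have h1 : (l.take m).prod * rest.prod = l.prod := by rw [← List.prod_append, hdecomp]
        have h2 : rest.prod = (l.take m).prod⁻¹ * l.prod := by rw [← h1]; group
        rw [h2]; exact H.mul_mem (H.inv_mem htprod) hprod
      obtain ⟨L', hLj, hLb, hLc⟩ := ih rest (by omega) hrne hrprod
      refine ⟨l.take m :: L', by simp [hLj, hdecomp], ?_, ?_⟩
      · intro b hb
        rcases List.mem_cons.mp hb with rfl | hb
        · refine ⟨?_, htprod⟩
          intro h0
          have h1 : (l.take m).length = 0 := by rw [h0]; rfl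
          rw [List.length_take] at h1
          omega
        · exact hLb b hb
      · have key : ∀ i, m ≤ i → ((rest.take (i - m)).prod ∈ H ↔ (l.take i).prod ∈ H) := by
          intro i hmi
          have heq : l.take i = l.take m ++ rest.take (i - m) := by
            conv_lhs => rw [show i = m + (i - m) by omega]
            exact List.take_add ..
          rw [heq, List.prod_append]
          constructor
          · intro h; exact H.mul_mem htprod h
          · intro h
            have := H.mul_mem (H.inv_mem htprod) h
            rwa [inv_mul_cancel_left] at this
        set A := (Finset.range l.length).filter (fun i => (l.take i).prod ∈ H) with hA
        set B := (Finset.range rest.length).filter (fun i => (rest.take i).prod ∈ H) with hB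
        have hge : ∀ i ∈ A.erase 0, m ≤ i := by
          intro i hi
          obtain ⟨hi0, hiA⟩ := Finset.mem_erase.mp hi
          rw [hA, Finset.mem_filter] at hiA
          exact Nat.find_min' hex ⟨Nat.pos_of_ne_zero hi0, hiA.2⟩
        have hmap : ∀ i ∈ A.erase 0, i - m ∈ B := by
          intro i hi
          have hmi := hge i hi
          obtain ⟨hi0, hiA⟩ := Finset.mem_erase.mp hi
          rw [hA, Finset.mem_filter, Finset.mem_range] at hiA
          rw [hB, Finset.mem_filter, Finset.mem_range, hrlen]
          exact ⟨by omega, (key i hmi).mpr hiA.2⟩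
        have hinj : Set.InjOn (· - m) (A.erase 0) := by
          intro i hi j hj hij
          have := hge i hi
          have := hge j hj
          simp only at hij
          omega
        have hcard1 : (A.erase 0).card ≤ B.card := Finset.card_le_card_of_injOn _ hmap hinj
        have hcard2 : A.card ≤ (A.erase 0).card + 1 := by
          by_cases h0 : 0 ∈ A
          · rw [Finset.card_erase_of_mem h0]; omega
          · rw [Finset.erase_eq_of_notMem h0]; omega
        simp only [List.length_cons]
        omega

end DavenportHelpers
/-- The set of products of a multiset `S` over `G`: all elements obtained by
multiplying the terms of `S` in some order. -/
def prodSet {G : Type*} [Group G] (S : Multiset G) : Set G :=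
  {g | ∃ l : List G, (l : Multiset G) = S ∧ l.prod = g}

/-- `S` is a product-one sequence if its terms can be ordered with product `1`. -/
def IsProductOne {G : Type*} [Group G] (S : Multiset G) : Prop :=
  (1 : G) ∈ prodSet S

/-- `S` is product-one free if no nonempty sub-multiset is a product-one sequence. -/
def ProductOneFree {G : Type*} [Group G] (S : Multiset G) : Prop :=
  ∀ T : Multiset G, T ≤ S → T ≠ 0 → ¬ IsProductOne T

/-- `S` is a minimal product-one sequence (an atom): a nonempty product-one sequence
that cannot be factored into two nonempty product-one sub-multisets. -/
def IsMinimalProductOne {G : Type*} [Group G] (S : Multiset G) : Prop :=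
  S ≠ 0 ∧ IsProductOne S ∧
    ¬ ∃ T T' : Multiset G, S = T + T' ∧ T ≠ 0 ∧ T' ≠ 0 ∧ IsProductOne T ∧ IsProductOne T'

/-- The small Davenport constant: the supremum of lengths of product-one free sequences. -/
noncomputable def smallDavenport (G : Type*) [Group G] : ℕ∞ :=
  sSup {n : ℕ∞ | ∃ S : Multiset G, ProductOneFree S ∧ (S.card : ℕ∞) = n}

/-- The large Davenport constant: the supremum of lengths of minimal product-one sequences. -/
noncomputable def largeDavenport (G : Type*) [Group G] : ℕ∞ :=
  sSup {n : ℕ∞ | ∃ S : Multiset G, IsMinimalProductOne S ∧ (S.card : ℕ∞) = n}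

theorem blocks_productOne' {G : Type*} [Group G] {B : Multiset (List G)} {tg : List G}
    (hBT : B.map List.prod = ↑tg) (htg : tg.prod = 1) :
    IsProductOne ((B.map Multiset.ofList).sum) := by
  obtain ⟨Lb, rfl⟩ : ∃ Lb : List (List G), (Lb : Multiset (List G)) = B :=
    ⟨B.toList, Multiset.coe_toList B⟩
  rw [Multiset.map_coe, Multiset.coe_eq_coe] at hBT
  obtain ⟨Lb', hLp, hLm⟩ := exists_perm_map_eq' hBT.symm
  refine ⟨Lb'.flatten, ?_, ?_⟩
  · rw [coe_join_eq', show (↑Lb' : Multiset (List G)) = ↑Lb from Multiset.coe_eq_coe.mpr hLp]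
  · rw [List.prod_flatten, hLm]
    exact htg

/-- For a finite group `G` and a subgroup `H ≤ G`, `D(G) ≤ D(H) * [G : H]`. -/
theorem largeDavenport_le_subgroup_mul_index {G : Type*} [Group G] [Finite G]
    (H : Subgroup G) :
    largeDavenport G ≤ largeDavenport H * (H.index : ℕ∞) := by
  classical
  refine sSup_le ?_
  rintro x ⟨S, hS, rfl⟩
  obtain ⟨hSne, hS1, hSmin⟩ := hS
  obtain ⟨l, hl, hlprod⟩ := hS1
  have hlne : l ≠ [] := by rintro rfl; exact hSne (by simp [← hl])
  set n := l.length with hn_def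
  have hn : 0 < n := List.length_pos_iff.mpr hlne
  have : Fintype (G ⧸ H) := Fintype.ofFinite _
  set f : ℕ → G ⧸ H := fun i => ((l.take i).prod : G ⧸ H) with hf
  have hsum : (Finset.range n).card
      = ∑ q ∈ Finset.univ, ((Finset.range n).filter (fun i => f i = q)).card :=
    Finset.card_eq_sum_card_fiberwise (fun x _ => Finset.mem_univ _)
  set M := Finset.univ.sup (fun q => ((Finset.range n).filter (fun i => f i = q)).card) with hM
  have hnM : n ≤ Fintype.card (G ⧸ H) * M := by
    have h1 : ∑ q ∈ Finset.univ, ((Finset.range n).filter (fun i => f i = q)).card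
        ≤ Finset.univ.card • M :=
      Finset.sum_le_card_nsmul _ _ M (fun q _ => Finset.le_sup (f := fun q => ((Finset.range n).filter (fun i => f i = q)).card) (Finset.mem_univ q))
    rw [← hsum, Finset.card_range, smul_eq_mul] at h1
    simpa [Finset.card_univ] using h1
  obtain ⟨q₀, -, hq₀⟩ := Finset.exists_mem_eq_sup Finset.univ
    ⟨((1 : G) : G ⧸ H), Finset.mem_univ _⟩
    (fun q => ((Finset.range n).filter (fun i => f i = q)).card)
  set F := (Finset.range n).filter (fun i => f i = q₀) with hF
  have hMF : M = F.card := hq₀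
  have hMpos : 0 < M := by
    rcases Nat.eq_zero_or_pos M with h0 | h
    · rw [h0, Nat.mul_zero] at hnM; omega
    · exact h
  have hFne : F.Nonempty := Finset.card_pos.mp (by omega)
  set m₁ := F.min' hFne with hm₁
  have hm₁F : m₁ ∈ F := F.min'_mem hFne
  have hm₁n : m₁ < n := Finset.mem_range.mp (Finset.mem_filter.mp hm₁F).1
  have hfm₁ : f m₁ = q₀ := (Finset.mem_filter.mp hm₁F).2
  set l' := l.rotate m₁ with hl'
  have hl'len : l'.length = n := List.length_rotate l m₁
  have hl'prod : l'.prod = 1 := List.prod_rotate_eq_one_of_prod_eq_one hlprod m₁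
  have hl'perm : l'.Perm l := List.rotate_perm l m₁
  have hl'ne : l' ≠ [] := by
    intro h0; rw [h0] at hl'len; simp at hl'len; omega
  have hpre : ∀ i, m₁ ≤ i → i ≤ n →
      (l'.take (i - m₁)).prod = (l.take m₁).prod⁻¹ * (l.take i).prod := by
    intro i h1 h2
    have hrot : l.rotate m₁ = l.drop m₁ ++ l.take m₁ :=
      List.rotate_eq_drop_append_take (le_of_lt hm₁n)
    have htk : (l.drop m₁ ++ l.take m₁).take (i - m₁) = (l.drop m₁).take (i - m₁) :=
      List.take_append_of_le_length (by rw [List.length_drop]; omega)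
    have hsplit : l.take i = l.take m₁ ++ (l.drop m₁).take (i - m₁) := by
      conv_lhs => rw [show i = m₁ + (i - m₁) by omega]
      exact List.take_add ..
    rw [hl', hrot, htk, hsplit, List.prod_append, inv_mul_cancel_left]
  have hfilter : F.card ≤ ((Finset.range n).filter (fun i => (l'.take i).prod ∈ H)).card := by
    apply Finset.card_le_card_of_injOn (fun i => i - m₁)
    · intro i hiF
      have hi := Finset.mem_filter.mp hiF
      have hin : i < n := Finset.mem_range.mp hi.1
      have hm₁i : m₁ ≤ i := F.min'_le i hiF
      show i - m₁ ∈ ((Finset.range n).filter (fun i => (l'.take i).prod ∈ H) : Finset ℕ)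
      rw [Finset.mem_filter, Finset.mem_range]
      refine ⟨by omega, ?_⟩
      rw [hpre i hm₁i (le_of_lt hin)]
      have heqq : ((l.take m₁).prod : G ⧸ H) = ((l.take i).prod : G ⧸ H) := by
        have h2 : f m₁ = f i := by rw [hfm₁, hi.2]
        simpa [hf] using h2
      exact QuotientGroup.eq.mp heqq
    · intro i hi j hj hij
      have h1 := F.min'_le i (Finset.mem_coe.mp hi)
      have h2 := F.min'_le j (Finset.mem_coe.mp hj)
      simp only at hij
      omega
  obtain ⟨L, hLj, hLb, hLc⟩ := exists_chop' H l'.length l' le_rfl hl'ne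
    (by rw [hl'prod]; exact H.one_mem)
  rw [hl'len] at hLc
  have hchain : n ≤ H.index * L.length := by
    have hidx : Fintype.card (G ⧸ H) = H.index := by
      rw [Subgroup.index_eq_card, Nat.card_eq_fintype_card]
    calc n ≤ Fintype.card (G ⧸ H) * M := hnM
    _ = H.index * F.card := by rw [hidx, hMF]
    _ ≤ H.index * ((Finset.range n).filter (fun i => (l'.take i).prod ∈ H)).card :=
        Nat.mul_le_mul_left _ hfilter
    _ ≤ H.index * L.length := Nat.mul_le_mul_left _ hLc
  have hLpos : 0 < L.length := by
    rcases Nat.eq_zero_or_pos L.length with h0 | h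
    · rw [h0, Nat.mul_zero] at hchain; omega
    · exact h
  have hLb2 : ∀ b ∈ L, b.prod ∈ H := fun b hb => (hLb b hb).2
  set lH : List H := L.pmap (fun (b : List G) (hb : b.prod ∈ H) => (⟨b.prod, hb⟩ : H)) hLb2 with hlH
  have hlHlen : lH.length = L.length := List.length_pmap
  have hlHmap : lH.map (fun h : H => (h : G)) = L.map List.prod := by
    rw [hlH, List.map_pmap]
    exact List.pmap_eq_map _
  have hlHprod : lH.prod = 1 := by
    have h2 : (lH.map (fun h : H => (h : G))).prod = ((lH.prod : H) : G) := by
      simpa using (List.prod_hom lH H.subtype)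
    have h1 : ((lH.prod : H) : G) = 1 := by
      rw [← h2, hlHmap, ← List.prod_flatten, hLj, hl'prod]
    exact OneMemClass.coe_eq_one.mp h1
  have hlHne : lH ≠ [] := by
    intro h0
    have : lH.length = 0 := by rw [h0]; rfl
    omega
  have hmemL : ∀ b, b ∈ (Multiset.ofList L) → b ≠ [] := by
    intro b hb
    exact (hLb b (by exact_mod_cast hb)).1
  have hScoe : S = ((Multiset.ofList L).map Multiset.ofList).sum := by
    rw [← hl, ← Multiset.coe_eq_coe.mpr hl'perm, ← hLj, coe_join_eq']
  have hmin : IsMinimalProductOne (↑lH : Multiset H) := by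
    refine ⟨by simpa using hlHne, ⟨lH, rfl, hlHprod⟩, ?_⟩
    rintro ⟨T, T', hTT, hT0, hT'0, hT1, hT'1⟩
    apply hSmin
    have hGmap : (Multiset.ofList L).map List.prod
        = T.map (fun h : H => (h : G)) + T'.map (fun h : H => (h : G)) := by
      rw [← Multiset.map_add, ← hTT, Multiset.map_coe, Multiset.map_coe, hlHmap]
    obtain ⟨B, B', hBB, hBT, hBT'⟩ := multiset_map_split' hGmap
    have hne : ∀ (C : Multiset (List G)) (U : Multiset H),
        C.map List.prod = U.map (fun h : H => (h : G)) → C ≤ Multiset.ofList L → U ≠ 0 →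
        (C.map Multiset.ofList).sum ≠ 0 := by
      intro C U hCU hCle hU0 h0
      have hC0 : C ≠ 0 := by
        intro h
        rw [h, Multiset.map_zero] at hCU
        exact hU0 (Multiset.map_eq_zero.mp hCU.symm)
      obtain ⟨b, hb⟩ := Multiset.exists_mem_of_ne_zero hC0
      have hb0 : Multiset.ofList b = 0 := by
        rw [Multiset.sum_eq_zero_iff] at h0
        exact h0 _ (Multiset.mem_map_of_mem _ hb)
      have hbnil : b = [] := (Multiset.coe_eq_zero b).mp hb0
      exact hmemL b (Multiset.mem_of_le hCle hb) hbnil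
    have hpo : ∀ (C : Multiset (List G)) (U : Multiset H),
        C.map List.prod = U.map (fun h : H => (h : G)) → IsProductOne U →
        IsProductOne ((C.map Multiset.ofList).sum) := by
      intro C U hCU hU1
      obtain ⟨ht, hht, htp⟩ := hU1
      apply blocks_productOne' (tg := ht.map (fun h : H => (h : G)))
      · rw [hCU, ← hht, Multiset.map_coe]
      · have h2 : (ht.map (fun h : H => (h : G))).prod = ((ht.prod : H) : G) := by
          simpa using (List.prod_hom ht H.subtype)
        rw [h2, htp]
        rfl
    refine ⟨(B.map Multiset.ofList).sum, (B'.map Multiset.ofList).sum, ?_, ?_, ?_, ?_, ?_⟩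
    · rw [hScoe, hBB, Multiset.map_add, Multiset.sum_add]
    · exact hne B T hBT (hBB ▸ Multiset.le_add_right B B') hT0
    · exact hne B' T' hBT' (hBB ▸ Multiset.le_add_left B' B) hT'0
    · exact hpo B T hBT hT1
    · exact hpo B' T' hBT' hT'1
  have hDH : ((L.length : ℕ) : ℕ∞) ≤ largeDavenport H :=
    le_sSup ⟨↑lH, hmin, by rw [Multiset.coe_card, hlHlen]⟩
  have hcardS : S.card = n := by rw [← hl, Multiset.coe_card]
  rw [hcardS]
  calc ((n : ℕ) : ℕ∞) ≤ ((H.index * L.length : ℕ) : ℕ∞) := by exact_mod_cast hchain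
  _ = ((L.length : ℕ) : ℕ∞) * ((H.index : ℕ) : ℕ∞) := by push_cast; ring
  _ ≤ largeDavenport H * (H.index : ℕ∞) := mul_le_mul_left hDH _
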